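/- Jittered noisy recovery condition: under the hypotheses of the jittered second-difference bound, if additionally η is a sequence with ‖η‖_∞ < ∞ and ρ((TΩ)² + 4νTΩ) + 4ρ_η < 1 where ρ = ‖g‖_∞/λ and ρ_η = ‖η‖_∞/λ, then |Δ²γ[k] + Δ²η[k]| < λ for all k, and hence M_λ(Δ²γ[k] + Δ²η[k]) = Δ²γ[k] + Δ²η[k]. -/

import Mathlib

noncomputable def modLam (lam g : ℝ) : ℝ := g - 2 * lam * ⌊(g + lam) / (2 * lam)⌋

def seqDiff (x : ℤ → ℝ) : ℤ → ℝ := fun k => x (k + 1) - x k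

lemma seqDiff_sq (x : ℤ → ℝ) (k : ℤ) :
    seqDiff^[2] x k = x (k + 2) - 2 * x (k + 1) + x k := by
  show seqDiff (seqDiff x) k = _
  simp only [seqDiff]
  have : k + 1 + 1 = k + 2 := by ring
  rw [this]; ring

lemma lip_of_deriv_bound (f : ℝ → ℝ) (C : ℝ) (hf : Differentiable ℝ f)
    (hC : ∀ x, |deriv f x| ≤ C) (a b : ℝ) : |f a - f b| ≤ C * |a - b| := by
  have := Convex.norm_image_sub_le_of_norm_deriv_le (s := (Set.univ : Set ℝ))
    (fun x _ => hf x) (fun x _ => hC x) convex_univ (Set.mem_univ b) (Set.mem_univ a)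
  simpa using this

theorem jittered_noisy_recovery_condition
    (g : ℝ → ℝ) (hg : ContDiff ℝ 2 g)
    (Ω Bg T ν lam Eη ρ ρη : ℝ) (hΩ : 0 < Ω) (hT : 0 < T) (hν : 0 ≤ ν)
    (hlam : 0 < lam)
    (hBg : ∀ t : ℝ, |g t| ≤ Bg)
    (hBern1 : ∀ t : ℝ, |deriv g t| ≤ Ω * Bg)
    (hBern2 : ∀ t : ℝ, |iteratedDeriv 2 g t| ≤ Ω ^ 2 * Bg)
    (μ : ℤ → ℝ) (hμ : ∀ k : ℤ, |μ k| ≤ ν * T)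
    (t : ℤ → ℝ) (ht : ∀ k : ℤ, t k = k * T + μ k)
    (γ : ℤ → ℝ) (hγ : ∀ k : ℤ, γ k = g (t k))
    (η : ℤ → ℝ) (hη : ∀ k : ℤ, |η k| ≤ Eη)
    (hρ : ρ = Bg / lam) (hρη : ρη = Eη / lam)
    (hcond : ρ * ((T * Ω) ^ 2 + 4 * ν * T * Ω) + 4 * ρη < 1) :
    ∀ k : ℤ, |seqDiff^[2] γ k + seqDiff^[2] η k| < lam ∧
      modLam lam (seqDiff^[2] γ k + seqDiff^[2] η k)
        = seqDiff^[2] γ k + seqDiff^[2] η k := by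
  have hBg0 : 0 ≤ Bg := le_trans (abs_nonneg _) (hBg 0)
  have hEη0 : 0 ≤ Eη := le_trans (abs_nonneg _) (hη 0)
  have hgdiff : Differentiable ℝ g := hg.differentiable (by norm_num)
  have hg'diff : Differentiable ℝ (deriv g) := by
    have := (contDiff_succ_iff_deriv (n := 1)).mp hg
    exact this.2.2.differentiable (by norm_num)
  have hBern2' : ∀ x : ℝ, |deriv (deriv g) x| ≤ Ω ^ 2 * Bg := by
    intro x
    have := hBern2 x
    rwa [iteratedDeriv_succ, iteratedDeriv_one] at this
  -- lipschitz for g and deriv g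
  have lipg : ∀ a b : ℝ, |g a - g b| ≤ Ω * Bg * |a - b| :=
    lip_of_deriv_bound g (Ω * Bg) hgdiff hBern1
  have lipg' : ∀ a b : ℝ, |deriv g a - deriv g b| ≤ Ω ^ 2 * Bg * |a - b| :=
    lip_of_deriv_bound (deriv g) (Ω ^ 2 * Bg) hg'diff hBern2'
  -- uniform second difference bound
  have unif : ∀ a : ℝ, |g (a + 2 * T) - 2 * g (a + T) + g a| ≤ Ω ^ 2 * Bg * T ^ 2 := by
    intro a
    set D : ℝ → ℝ := fun s => g (s + T) - g s with hD
    have hDdiff : Differentiable ℝ D :=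
      (hgdiff.comp (differentiable_id.add_const T)).sub hgdiff
    have hDderiv : ∀ s, deriv D s = deriv g (s + T) - deriv g s := by
      intro s
      have h1 : HasDerivAt (fun s : ℝ => g (s + T)) (deriv g (s + T)) s := by
        simpa [Function.comp_def] using (hgdiff (s + T)).hasDerivAt.comp s
          ((hasDerivAt_id s).add_const T)
      exact ((h1.sub (hgdiff s).hasDerivAt)).deriv
    have hDC : ∀ s, |deriv D s| ≤ Ω ^ 2 * Bg * T := by
      intro s
      rw [hDderiv s]
      have := lipg' (s + T) s
      simpa [abs_of_pos hT] using this
    have key := lip_of_deriv_bound D (Ω ^ 2 * Bg * T) hDdiff hDC (a + T) a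
    have e1 : D (a + T) - D a = g (a + 2 * T) - 2 * g (a + T) + g a := by
      simp only [hD]; ring_nf
    rw [e1] at key
    calc |g (a + 2 * T) - 2 * g (a + T) + g a| ≤ Ω ^ 2 * Bg * T * |a + T - a| := key
      _ = Ω ^ 2 * Bg * T ^ 2 := by
          rw [show a + T - a = T by ring, abs_of_pos hT]; ring
  -- jitter bound : |γ j - g(j*T)| ≤ Ω*Bg*(ν*T)
  have jit : ∀ j : ℤ, |γ j - g (j * T)| ≤ Ω * Bg * (ν * T) := by
    intro j
    rw [hγ j, ht j]
    calc |g (j * T + μ j) - g (j * T)| ≤ Ω * Bg * |j * T + μ j - j * T| := lipg _ _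
      _ ≤ Ω * Bg * (ν * T) := by
          apply mul_le_mul_of_nonneg_left _ (by positivity)
          simpa using hμ j
  intro k
  -- bound Δ²γ
  have hΔγ : |seqDiff^[2] γ k| ≤ Bg * ((T * Ω) ^ 2 + 4 * ν * T * Ω) := by
    rw [seqDiff_sq]
    set a : ℝ := (k : ℝ) * T
    have e2 : ((k : ℤ) + 2 : ℤ) * T = a + 2 * T := by push_cast [a]; ring
    have e1 : ((k : ℤ) + 1 : ℤ) * T = a + T := by push_cast [a]; ring
    have decomp : γ (k + 2) - 2 * γ (k + 1) + γ k
        = (g (a + 2 * T) - 2 * g (a + T) + g a)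
          + ((γ (k + 2) - g (((k : ℤ) + 2 : ℤ) * T))
            - 2 * (γ (k + 1) - g (((k : ℤ) + 1 : ℤ) * T))
            + (γ k - g ((k : ℝ) * T))) := by
      rw [e2, e1]; ring
    rw [decomp]
    have b1 := unif a
    have b2 := jit (k + 2)
    have b3 := jit (k + 1)
    have b4 := jit k
    rw [show (((k : ℤ) + 2 : ℤ) : ℝ) = (k : ℝ) + 2 by push_cast; ring] at b2
    rw [show (((k : ℤ) + 1 : ℤ) : ℝ) = (k : ℝ) + 1 by push_cast; ring] at b3
    have : |(γ (k + 2) - g (((k : ℤ) + 2 : ℤ) * T))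
            - 2 * (γ (k + 1) - g (((k : ℤ) + 1 : ℤ) * T))
            + (γ k - g ((k : ℝ) * T))| ≤ 4 * (Ω * Bg * (ν * T)) := by
      push_cast
      calc _ ≤ |γ (k + 2) - g (((k : ℝ) + 2) * T)|
            + 2 * |γ (k + 1) - g (((k : ℝ) + 1) * T)| + |γ k - g ((k : ℝ) * T)| := by
            have := abs_add_le (γ (k + 2) - g (((k : ℝ) + 2) * T)
              - 2 * (γ (k + 1) - g (((k : ℝ) + 1) * T))) (γ k - g ((k : ℝ) * T))
            have h2 := abs_sub (γ (k + 2) - g (((k : ℝ) + 2) * T))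
              (2 * (γ (k + 1) - g (((k : ℝ) + 1) * T)))
            rw [abs_mul, abs_two] at h2
            linarith
        _ ≤ Ω * Bg * (ν * T) + 2 * (Ω * Bg * (ν * T)) + Ω * Bg * (ν * T) := by
            gcongr <;> first | exact b2 | exact b3 | exact b4
        _ = 4 * (Ω * Bg * (ν * T)) := by ring
    calc |g (a + 2 * T) - 2 * g (a + T) + g a
          + ((γ (k + 2) - g (((k : ℤ) + 2 : ℤ) * T))
            - 2 * (γ (k + 1) - g (((k : ℤ) + 1 : ℤ) * T))
            + (γ k - g ((k : ℝ) * T)))|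
        ≤ Ω ^ 2 * Bg * T ^ 2 + 4 * (Ω * Bg * (ν * T)) := by
          refine le_trans (abs_add_le _ _) ?_; gcongr
      _ = Bg * ((T * Ω) ^ 2 + 4 * ν * T * Ω) := by ring
  -- bound Δ²η
  have hΔη : |seqDiff^[2] η k| ≤ 4 * Eη := by
    rw [seqDiff_sq]
    calc |η (k + 2) - 2 * η (k + 1) + η k|
        ≤ |η (k + 2)| + 2 * |η (k + 1)| + |η k| := by
          have := abs_add_le (η (k + 2) - 2 * η (k + 1)) (η k)
          have h2 := abs_sub (η (k + 2)) (2 * η (k + 1))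
          rw [abs_mul, abs_two] at h2
          linarith
      _ ≤ Eη + 2 * Eη + Eη := by gcongr <;> apply hη
      _ = 4 * Eη := by ring
  have hlt : |seqDiff^[2] γ k + seqDiff^[2] η k| < lam := by
    have key : Bg * ((T * Ω) ^ 2 + 4 * ν * T * Ω) + 4 * Eη < lam := by
      have : (Bg * ((T * Ω) ^ 2 + 4 * ν * T * Ω) + 4 * Eη) / lam < 1 := by
        rw [hρ, hρη] at hcond
        calc (Bg * ((T * Ω) ^ 2 + 4 * ν * T * Ω) + 4 * Eη) / lam
            = Bg / lam * ((T * Ω) ^ 2 + 4 * ν * T * Ω) + 4 * (Eη / lam) := by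
              field_simp
          _ < 1 := hcond
      have := (div_lt_one hlam).mp this
      linarith
    calc |seqDiff^[2] γ k + seqDiff^[2] η k|
        ≤ |seqDiff^[2] γ k| + |seqDiff^[2] η k| := abs_add_le _ _
      _ ≤ Bg * ((T * Ω) ^ 2 + 4 * ν * T * Ω) + 4 * Eη := by gcongr
      _ < lam := key
  refine ⟨hlt, ?_⟩
  set x := seqDiff^[2] γ k + seqDiff^[2] η k
  have hfloor : ⌊(x + lam) / (2 * lam)⌋ = 0 := by
    rw [Int.floor_eq_zero_iff]
    constructor
    · apply div_nonneg _ (by linarith)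
      have := abs_lt.mp hlt
      linarith [this.1]
    · rw [div_lt_one (by linarith)]
      have := abs_lt.mp hlt
      linarith [this.2]
  simp [modLam, hfloor]
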